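/- If the step size satisfies 0 < η < 1/(L(1 + 2√p·s)), then Σ_{t=0}^{∞} ‖x(t+1) − x(t)‖^2 ≤ (2/(1/η − L − 2√p·L·s)) · (F(x(0)) − inf_{z ∈ E} F(z)). -/

import Mathlib

open Filter Topology
open scoped InnerProductSpace

section Aux

open intervalIntegral in
lemma descent_lemma {E : Type*} [NormedAddCommGroup E] [InnerProductSpace ℝ E] [CompleteSpace E]
    (f : E → ℝ) (f' : E → E) (hf : ∀ y, HasGradientAt f (f' y) y)
    (L : ℝ) (hL : 0 ≤ L) (hlip : ∀ y z, ‖f' y - f' z‖ ≤ L * ‖y - z‖) (a b : E) :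
    f b ≤ f a + ⟪f' a, b - a⟫_ℝ + L / 2 * ‖b - a‖ ^ 2 := by
  set v := b - a with hv
  have hcont : Continuous f' :=
    (LipschitzWith.of_dist_le_mul (K := ⟨L, hL⟩) (fun y z => by
        rw [dist_eq_norm, dist_eq_norm]; exact hlip y z)).continuous
  set c : ℝ → E := fun t => a + t • v with hc
  have hcc : Continuous c := by continuity
  set φ' : ℝ → ℝ := fun t => ⟪f' (c t), v⟫_ℝ with hφ'
  have hderiv : ∀ t : ℝ, HasDerivAt (fun u => f (c u)) (φ' t) t := by
    intro t
    have h1 : HasDerivAt c v t := by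
      have : HasDerivAt (fun u : ℝ => u • v) ((1:ℝ) • v) t := (hasDerivAt_id t).smul_const v
      simpa [hc] using this.const_add a
    have h2 := (hf (c t)).hasFDerivAt
    have := h2.comp_hasDerivAt t h1
    simpa [hφ', InnerProductSpace.toDual, Function.comp_def] using this
  have hcφ : Continuous φ' := (hcont.comp hcc).inner continuous_const
  have hfund : f (c 1) - f (c 0) = ∫ t in (0:ℝ)..1, φ' t := by
    rw [integral_eq_sub_of_hasDerivAt (fun t _ => hderiv t) (hcφ.intervalIntegrable 0 1)]
  have hbound : ∀ t ∈ Set.Icc (0:ℝ) 1, φ' t ≤ ⟪f' a, v⟫_ℝ + L * t * ‖v‖ ^ 2 := by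
    intro t ht
    have : φ' t - ⟪f' a, v⟫_ℝ = ⟪f' (c t) - f' a, v⟫_ℝ := by
      rw [inner_sub_left]
    have h3 : ⟪f' (c t) - f' a, v⟫_ℝ ≤ ‖f' (c t) - f' a‖ * ‖v‖ :=
      real_inner_le_norm _ _
    have h4 : ‖f' (c t) - f' a‖ ≤ L * (t * ‖v‖) := by
      have := hlip (c t) a
      simpa [hc, mul_assoc, norm_smul, abs_of_nonneg ht.1] using this
    nlinarith [norm_nonneg v, norm_nonneg (f' (c t) - f' a), ht.1]
  have hint : (∫ t in (0:ℝ)..1, φ' t) ≤ ∫ t in (0:ℝ)..1, (⟪f' a, v⟫_ℝ + L * t * ‖v‖ ^ 2) := by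
    apply integral_mono_on zero_le_one (hcφ.intervalIntegrable 0 1)
      ((by continuity : Continuous fun t : ℝ => ⟪f' a, v⟫_ℝ + L * t * ‖v‖ ^ 2).intervalIntegrable 0 1)
    exact hbound
  have hval : (∫ t in (0:ℝ)..1, (⟪f' a, v⟫_ℝ + L * t * ‖v‖ ^ 2)) = ⟪f' a, v⟫_ℝ + L / 2 * ‖v‖ ^ 2 := by
    simp_rw [show ∀ t : ℝ, ⟪f' a, v⟫_ℝ + L * t * ‖v‖ ^ 2 = ⟪f' a, v⟫_ℝ + (L * ‖v‖ ^ 2) * t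
      from fun t => by ring]
    rw [integral_add intervalIntegrable_const
      ((by fun_prop : Continuous fun t : ℝ => L * ‖v‖ ^ 2 * t).intervalIntegrable 0 1),
      integral_const_mul, integral_id]
    simp; ring
  have hc0 : c 0 = a := by simp [hc]
  have hc1 : c 1 = b := by simp [hc, hv]
  have := hfund.le.trans (hint.trans hval.le)
  rw [hc0, hc1] at this
  linarith

lemma ereal_coe_sum {ι : Type*} (s : Finset ι) (v : ι → ℝ) :
    ((∑ i ∈ s, v i : ℝ) : EReal) = ∑ i ∈ s, (v i : EReal) := by
  induction s using Finset.cons_induction with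
  | empty => simp
  | cons a s ha ih => rw [Finset.sum_cons, Finset.sum_cons, EReal.coe_add, ih]

lemma ereal_sum_ne_bot {ι : Type*} {s : Finset ι} {v : ι → EReal}
    (h : ∀ i ∈ s, v i ≠ ⊥) : ∑ i ∈ s, v i ≠ ⊥ := by
  induction s using Finset.cons_induction with
  | empty => simp
  | cons a s ha ih =>
    rw [Finset.sum_cons]
    simp only [ne_eq, EReal.add_eq_bot_iff, not_or]
    exact ⟨h a (Finset.mem_cons_self a s), ih fun i hi => h i (Finset.mem_cons_of_mem hi)⟩

lemma ereal_sum_ne_top {ι : Type*} [DecidableEq ι] {s : Finset ι} {v : ι → EReal}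
    (hb : ∀ i ∈ s, v i ≠ ⊥) (h : ∑ i ∈ s, v i ≠ ⊤) : ∀ i ∈ s, v i ≠ ⊤ := by
  intro i hi hc
  apply h
  rw [← Finset.add_sum_erase _ _ hi, hc]
  exact EReal.top_add_of_ne_bot
    (ereal_sum_ne_bot fun j hj => hb j (Finset.mem_of_mem_erase hj))

lemma sq_le_imp {a b : ℝ} (hb : 0 ≤ b) (h : a ^ 2 ≤ b ^ 2) (ha : 0 ≤ a) : a ≤ b := by
  nlinarith

lemma swap_sum (b : ℕ → ℝ) (hb : ∀ k, 0 ≤ b k) (s n : ℕ) :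
    ∑ t ∈ Finset.range n, ∑ k ∈ Finset.Ico (t - s) t, b k ≤ s * ∑ t ∈ Finset.range n, b t := by
  have h1 : ∀ t ∈ Finset.range n, ∑ k ∈ Finset.Ico (t - s) t, b k =
      ∑ k ∈ Finset.range n, if k ∈ Finset.Ico (t - s) t then b k else 0 := by
    intro t ht
    rw [Finset.sum_ite_mem, Finset.inter_eq_right.mpr]
    intro k hk
    simp only [Finset.mem_Ico] at hk
    simp only [Finset.mem_range] at ht ⊢
    omega
  rw [Finset.sum_congr rfl h1, Finset.sum_comm, Finset.mul_sum]
  apply Finset.sum_le_sum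
  intro k _
  calc (∑ t ∈ Finset.range n, if k ∈ Finset.Ico (t - s) t then b k else 0)
      ≤ ∑ t ∈ Finset.range n, if t ∈ Finset.Ioc k (k + s) then b k else 0 := by
        apply Finset.sum_le_sum
        intro t _
        split_ifs with hx hy
        · exact le_refl _
        · exfalso
          simp only [Finset.mem_Ico] at hx
          simp only [Finset.mem_Ioc] at hy
          omega
        · exact hb k
        · exact le_refl _
    _ = ∑ t ∈ Finset.range n ∩ Finset.Ioc k (k + s), b k := Finset.sum_ite_mem _ _ _
    _ ≤ s * b k := by
        rw [Finset.sum_const, nsmul_eq_mul]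
        apply mul_le_mul_of_nonneg_right _ (hb k)
        have hsub := Finset.card_le_card
          (Finset.inter_subset_right (s₁ := Finset.range n) (s₂ := Finset.Ioc k (k + s)))
        rw [Nat.card_Ioc] at hsub
        exact_mod_cast hsub.trans (by omega)

end Aux

noncomputable abbrev EE (p : ℕ) (d : Fin p → ℕ) : Type :=
  PiLp 2 (fun i : Fin p => EuclideanSpace ℝ (Fin (d i)))
theorem stmt_4
    (p s : ℕ) (hp : 1 ≤ p) (d : Fin p → ℕ) (hd : ∀ i, 1 ≤ d i)
    (τ : Fin p → Fin p → ℕ → ℕ)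
    (hτ_le : ∀ i j t, τ i j t ≤ t)
    (hτ_ge : ∀ i j t, t ≤ τ i j t + s)
    (hτ_self : ∀ i t, τ i i t = t)
    (x : (i : Fin p) → ℕ → EuclideanSpace ℝ (Fin (d i)))
    (X : ℕ → EE p d) (hX : ∀ t i, X t i = x i t)
    (Xl : Fin p → ℕ → EE p d) (hXl : ∀ i t j, Xl i t j = x j (τ i j t))
    (T : Fin p → Set ℕ)
    (hT : ∀ i t, ∃ k ∈ T i, t ≤ k ∧ k ≤ t + s)
    (η L : ℝ) (hη : 0 < η) (hL : 0 < L)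
    (f : EE p d → ℝ) (f' : EE p d → EE p d)
    (hf : ∀ y, HasGradientAt f (f' y) y)
    (hlip : ∀ y z, ‖f' y - f' z‖ ≤ L * ‖y - z‖)
    (g : (i : Fin p) → EuclideanSpace ℝ (Fin (d i)) → EReal)
    (hg_nebot : ∀ i z, g i z ≠ ⊥)
    (hg_proper : ∀ i, ∃ z, g i z ≠ ⊤)
    (hg_lsc : ∀ i, LowerSemicontinuous (g i))
    (F : EE p d → EReal)
    (hF : ∀ y, F y = (f y : EReal) + ∑ i, g i (y i))
    (hF_bdd : ∃ m : ℝ, ∀ y, (m : EReal) ≤ F y)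
    (hF0 : F (X 0) < ⊤)
    (hskip : ∀ i t, t ∉ T i → x i (t + 1) = x i t)
    (hupd : ∀ i t, t ∈ T i → ∀ z : EuclideanSpace ℝ (Fin (d i)),
      g i (x i (t + 1)) +
        ((1 / (2 * η) * ‖x i (t + 1) - (x i t - η • f' (Xl i t) i)‖ ^ 2 : ℝ) : EReal)
      ≤ g i z + ((1 / (2 * η) * ‖z - (x i t - η • f' (Xl i t) i)‖ ^ 2 : ℝ) : EReal))
    (hstep : η < 1 / (L * (1 + 2 * Real.sqrt p * s))) :
    ∀ n : ℕ,
      ∑ t ∈ Finset.range n, ‖X (t + 1) - X t‖ ^ 2 ≤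
        2 / (1 / η - L - 2 * Real.sqrt p * L * s) *
          (F (X 0) - sInf (Set.range F)).toReal := by
  intro n
  classical
  set a : ℕ → ℝ := fun t => ‖X (t + 1) - X t‖ with ha
  have ha_nonneg : ∀ t, 0 ≤ a t := fun t => norm_nonneg _
  have happ : ∀ t i, (X (t + 1) - X t) i = x i (t + 1) - x i t := by
    intro t i
    rw [PiLp.sub_apply, hX, hX]
  have hnormsq : ∀ t, a t ^ 2 = ∑ i, ‖x i (t + 1) - x i t‖ ^ 2 := by
    intro t
    rw [ha]
    rw [PiLp.norm_sq_eq_of_L2]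
    exact Finset.sum_congr rfl fun i _ => by rw [happ]
  -- finiteness of g along the trajectory
  have hne_top : ∀ t i, g i (x i t) ≠ ⊤ := by
    intro t
    induction t with
    | zero =>
      have h0 : (∑ i, g i (X 0 i)) ≠ ⊤ := by
        intro hc
        rw [hF (X 0), hc, EReal.coe_add_top] at hF0
        exact (lt_irrefl _ hF0)
      intro i
      have := ereal_sum_ne_top (s := Finset.univ) (v := fun i => g i (X 0 i))
        (fun i _ => hg_nebot i _) h0 i (Finset.mem_univ i)
      simpa only [hX] using this
    | succ t ih =>
      intro i
      by_cases ht : t ∈ T i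
      · intro hc
        have h := hupd i t ht (x i t)
        rw [hc, EReal.top_add_of_ne_bot (EReal.coe_ne_bot _)] at h
        have h2 : g i (x i t) = ((g i (x i t)).toReal : EReal) :=
          (EReal.coe_toReal (ih i) (hg_nebot i _)).symm
        rw [h2, ← EReal.coe_add] at h
        exact (EReal.coe_ne_top _) (top_le_iff.mp h)
      · rw [hskip i t ht]; exact ih i
  have hcoe : ∀ i t, g i (x i t) = (((g i (x i t)).toReal : ℝ) : EReal) :=
    fun i t => (EReal.coe_toReal (hne_top t i) (hg_nebot i _)).symm
  set G : ℕ → Fin p → ℝ := fun t i => (g i (x i t)).toReal with hG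
  have hcoeG : ∀ i t, g i (x i t) = ((G t i : ℝ) : EReal) := fun i t => hcoe i t
  -- key per-block inequality
  have key : ∀ t i, G (t + 1) i + 1 / (2 * η) * ‖x i (t + 1) - x i t‖ ^ 2
      + ⟪x i (t + 1) - x i t, f' (Xl i t) i⟫_ℝ ≤ G t i := by
    intro t i
    by_cases ht : t ∈ T i
    · have h := hupd i t ht (x i t)
      rw [hcoeG i (t + 1), hcoeG i t, ← EReal.coe_add, ← EReal.coe_add,
        EReal.coe_le_coe_iff] at h
      set v := f' (Xl i t) i with hv
      have e1 : x i (t + 1) - (x i t - η • v) = (x i (t + 1) - x i t) + η • v := by abel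
      have e2 : x i t - (x i t - η • v) = η • v := by abel
      rw [e1, e2] at h
      have hx1 : ‖(x i (t + 1) - x i t) + η • v‖ ^ 2 =
          ‖x i (t + 1) - x i t‖ ^ 2 + 2 * (η * ⟪x i (t + 1) - x i t, v⟫_ℝ) + ‖η • v‖ ^ 2 := by
        rw [norm_add_sq_real, real_inner_smul_right]
      rw [hx1] at h
      have hηne : η ≠ 0 := ne_of_gt hη
      have expand : 1 / (2 * η) * (‖x i (t + 1) - x i t‖ ^ 2
          + 2 * (η * ⟪x i (t + 1) - x i t, v⟫_ℝ) + ‖η • v‖ ^ 2)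
          = 1 / (2 * η) * ‖x i (t + 1) - x i t‖ ^ 2 + ⟪x i (t + 1) - x i t, v⟫_ℝ
            + 1 / (2 * η) * ‖η • v‖ ^ 2 := by
        field_simp
      rw [expand] at h
      linarith
    · have hsk := hskip i t ht
      have hGeq : G (t + 1) i = G t i := by simp only [hG]; rw [hsk]
      rw [hGeq, hsk]
      simp
  -- descent lemma per step
  have hdesc : ∀ t, f (X (t + 1)) ≤ f (X t) + ⟪f' (X t), X (t + 1) - X t⟫_ℝ
      + L / 2 * a t ^ 2 :=
    fun t => descent_lemma f f' hf L hL.le hlip (X t) (X (t + 1))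
  -- block norm bounds
  have hblock : ∀ (u : EE p d) (i : Fin p), ‖u i‖ ≤ ‖u‖ := by
    intro u i
    apply sq_le_imp (norm_nonneg _) _ (norm_nonneg _)
    rw [PiLp.norm_sq_eq_of_L2 (fun j : Fin p => EuclideanSpace ℝ (Fin (d j))) u]
    exact Finset.single_le_sum (f := fun j => ‖u j‖ ^ 2) (fun j _ => by positivity)
      (Finset.mem_univ i)
  have hsumnorm : ∀ u : EE p d, ∑ i, ‖u i‖ ≤ Real.sqrt p * ‖u‖ := by
    intro u
    apply sq_le_imp (b := Real.sqrt p * ‖u‖) (by positivity) _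
      (Finset.sum_nonneg fun i _ => norm_nonneg _)
    have h1 := sq_sum_le_card_mul_sum_sq (s := (Finset.univ : Finset (Fin p)))
      (f := fun i => ‖u i‖)
    rw [Finset.card_univ, Fintype.card_fin] at h1
    calc (∑ i, ‖u i‖) ^ 2 ≤ (p : ℝ) * ∑ i, ‖u i‖ ^ 2 := h1
      _ = (Real.sqrt p * ‖u‖) ^ 2 := by
        rw [mul_pow, Real.sq_sqrt (Nat.cast_nonneg p),
          PiLp.norm_sq_eq_of_L2 (fun j : Fin p => EuclideanSpace ℝ (Fin (d j))) u]
  -- delay distance bound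
  set D : ℕ → ℝ := fun t => ∑ k ∈ Finset.Ico (t - s) t, a k with hD
  have hXldist : ∀ i t, ‖X t - Xl i t‖ ≤ D t := by
    intro i t
    set W : ℕ → EE p d :=
      fun k => WithLp.toLp 2 (fun j => if τ i j t ≤ k then x j (k + 1) - x j k else 0) with hW
    have hWapp : ∀ k j, W k j = if τ i j t ≤ k then x j (k + 1) - x j k else 0 :=
      fun k j => rfl
    have hsumW : X t - Xl i t = ∑ k ∈ Finset.Ico (t - s) t, W k := by
      refine PiLp.ext fun j => ?_
      rw [WithLp.ofLp_sum, Finset.sum_apply, PiLp.sub_apply, hX, hXl]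
      have hsub : Finset.Ico (τ i j t) t ⊆ Finset.Ico (t - s) t := by
        intro k hk
        simp only [Finset.mem_Ico] at hk ⊢
        have := hτ_ge i j t
        omega
      have hz : ∀ k ∈ Finset.Ico (t - s) t, k ∉ Finset.Ico (τ i j t) t → W k j = 0 := by
        intro k hk hk2
        have hc : ¬ τ i j t ≤ k := by
          simp only [Finset.mem_Ico] at hk hk2
          omega
        rw [hWapp, if_neg hc]
      rw [← Finset.sum_subset hsub hz]
      rw [Finset.sum_congr rfl (fun k hk => by
        rw [hWapp, if_pos (Finset.mem_Ico.mp hk).1])]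
      rw [Finset.sum_Ico_eq_sub _ (hτ_le i j t),
        Finset.sum_range_sub (fun k => x j k), Finset.sum_range_sub (fun k => x j k)]
      abel
    have hWle : ∀ k, ‖W k‖ ≤ a k := by
      intro k
      apply sq_le_imp (ha_nonneg k) _ (norm_nonneg _)
      rw [PiLp.norm_sq_eq_of_L2, hnormsq]
      apply Finset.sum_le_sum
      intro j _
      rw [hWapp]
      split_ifs with h
      · exact le_refl _
      · have h0 : ‖(0 : EuclideanSpace ℝ (Fin (d j)))‖ ^ 2 = 0 := by simp
        rw [h0]
        positivity
    calc ‖X t - Xl i t‖ = ‖∑ k ∈ Finset.Ico (t - s) t, W k‖ := by rw [hsumW]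
      _ ≤ ∑ k ∈ Finset.Ico (t - s) t, ‖W k‖ := norm_sum_le _ _
      _ ≤ D t := Finset.sum_le_sum fun k _ => hWle k
  -- per-step master inequality
  have hstep1 : ∀ t, f (X (t + 1)) + ∑ i, G (t + 1) i + (1 / (2 * η) - L / 2) * a t ^ 2 ≤
      f (X t) + ∑ i, G t i + Real.sqrt p * L * (D t * a t) := by
    intro t
    have hks := Finset.sum_le_sum (fun i (_ : i ∈ (Finset.univ : Finset (Fin p))) => key t i)
    rw [Finset.sum_add_distrib, Finset.sum_add_distrib, ← Finset.mul_sum, ← hnormsq] at hks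
    simp only [← happ] at hks
    have hd := hdesc t
    rw [PiLp.inner_apply] at hd
    have hcross : ∑ i, ⟪f' (X t) i, (X (t + 1) - X t) i⟫_ℝ
        - ∑ i, ⟪(X (t + 1) - X t) i, f' (Xl i t) i⟫_ℝ
        ≤ Real.sqrt p * L * (D t * a t) := by
      rw [← Finset.sum_sub_distrib]
      have hterm : ∀ i : Fin p, ⟪f' (X t) i, (X (t + 1) - X t) i⟫_ℝ
          - ⟪(X (t + 1) - X t) i, f' (Xl i t) i⟫_ℝ
          ≤ (L * D t) * ‖(X (t + 1) - X t) i‖ := by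
        intro i
        have e3 : ⟪f' (X t) i, (X (t + 1) - X t) i⟫_ℝ
            - ⟪(X (t + 1) - X t) i, f' (Xl i t) i⟫_ℝ
            = ⟪f' (X t) i - f' (Xl i t) i, (X (t + 1) - X t) i⟫_ℝ := by
          rw [inner_sub_left, real_inner_comm ((X (t + 1) - X t) i),
            real_inner_comm ((X (t + 1) - X t) i) (f' (Xl i t) i)]
        rw [e3]
        have h5 : ‖f' (X t) i - f' (Xl i t) i‖ ≤ L * D t := by
          calc ‖f' (X t) i - f' (Xl i t) i‖ = ‖(f' (X t) - f' (Xl i t)) i‖ := by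
                rw [PiLp.sub_apply]
            _ ≤ ‖f' (X t) - f' (Xl i t)‖ := hblock _ i
            _ ≤ L * ‖X t - Xl i t‖ := hlip _ _
            _ ≤ L * D t := mul_le_mul_of_nonneg_left (hXldist i t) hL.le
        calc ⟪f' (X t) i - f' (Xl i t) i, (X (t + 1) - X t) i⟫_ℝ
            ≤ ‖f' (X t) i - f' (Xl i t) i‖ * ‖(X (t + 1) - X t) i‖ := real_inner_le_norm _ _
          _ ≤ (L * D t) * ‖(X (t + 1) - X t) i‖ :=
              mul_le_mul_of_nonneg_right h5 (norm_nonneg _)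
      have hDt : 0 ≤ D t := Finset.sum_nonneg fun k _ => ha_nonneg k
      calc ∑ i, (⟪f' (X t) i, (X (t + 1) - X t) i⟫_ℝ
            - ⟪(X (t + 1) - X t) i, f' (Xl i t) i⟫_ℝ)
          ≤ ∑ i, (L * D t) * ‖(X (t + 1) - X t) i‖ :=
            Finset.sum_le_sum fun i _ => hterm i
        _ = (L * D t) * ∑ i, ‖(X (t + 1) - X t) i‖ := (Finset.mul_sum _ _ _).symm
        _ ≤ (L * D t) * (Real.sqrt p * ‖X (t + 1) - X t‖) :=
            mul_le_mul_of_nonneg_left (hsumnorm _) (by positivity)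
        _ = Real.sqrt p * L * (D t * a t) := by rw [ha]; ring
    linarith
  -- telescoping sum
  have hΦsum : ∀ N : ℕ, f (X N) + ∑ i, G N i +
      ∑ t ∈ Finset.range N,
        ((1 / (2 * η) - L / 2) * a t ^ 2 - Real.sqrt p * L * (D t * a t))
      ≤ f (X 0) + ∑ i, G 0 i := by
    intro N
    induction N with
    | zero => simp
    | succ N ih =>
      have h1 := hstep1 N
      rw [Finset.sum_range_succ]
      linarith
  set S : ℝ := ∑ t ∈ Finset.range n, a t ^ 2 with hS
  have hS_nonneg : 0 ≤ S := Finset.sum_nonneg fun t _ => by positivity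
  -- bound the delay cross sums
  have hDa : ∑ t ∈ Finset.range n, D t * a t ≤ (s : ℝ) * S := by
    have step1 : ∀ t ∈ Finset.range n, D t * a t ≤
        (∑ k ∈ Finset.Ico (t - s) t, a k ^ 2 / 2) + (s : ℝ) * (a t ^ 2 / 2) := by
      intro t _
      have e4 : D t * a t = ∑ k ∈ Finset.Ico (t - s) t, a k * a t := by
        rw [hD]; exact Finset.sum_mul _ _ _
      rw [e4]
      have step11 : ∑ k ∈ Finset.Ico (t - s) t, a k * a t ≤
          ∑ k ∈ Finset.Ico (t - s) t, (a k ^ 2 / 2 + a t ^ 2 / 2) :=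
        Finset.sum_le_sum fun k _ => by nlinarith [sq_nonneg (a k - a t)]
      rw [Finset.sum_add_distrib, Finset.sum_const, nsmul_eq_mul] at step11
      have hcard : ((Finset.Ico (t - s) t).card : ℝ) ≤ (s : ℝ) := by
        rw [Nat.card_Ico]
        exact_mod_cast (by omega : t - (t - s) ≤ s)
      have := mul_le_mul_of_nonneg_right hcard (by positivity : (0:ℝ) ≤ a t ^ 2 / 2)
      linarith
    calc ∑ t ∈ Finset.range n, D t * a t
        ≤ ∑ t ∈ Finset.range n,
            ((∑ k ∈ Finset.Ico (t - s) t, a k ^ 2 / 2) + (s : ℝ) * (a t ^ 2 / 2)) :=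
          Finset.sum_le_sum step1
      _ = (∑ t ∈ Finset.range n, ∑ k ∈ Finset.Ico (t - s) t, a k ^ 2 / 2)
          + (s : ℝ) * (S / 2) := by
          rw [Finset.sum_add_distrib, ← Finset.mul_sum, ← Finset.sum_div]
      _ ≤ (s : ℝ) * (S / 2) + (s : ℝ) * (S / 2) := by
          have hsw := swap_sum (fun k => a k ^ 2 / 2) (fun k => by positivity) s n
          rw [← Finset.sum_div] at hsw
          have : (s : ℝ) * (∑ t ∈ Finset.range n, a t ^ 2) / 2 = (s : ℝ) * (S / 2) := by
            rw [hS]; ring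
          linarith [hsw]
      _ = (s : ℝ) * S := by ring
  -- main decrease inequality
  have hsqrt : 0 ≤ Real.sqrt p := Real.sqrt_nonneg _
  have hmain : f (X n) + ∑ i, G n i +
      (1 / (2 * η) - L / 2 - Real.sqrt p * L * s) * S ≤ f (X 0) + ∑ i, G 0 i := by
    have h1 := hΦsum n
    rw [Finset.sum_sub_distrib, ← Finset.mul_sum, ← Finset.mul_sum, ← hS] at h1
    have h2 : Real.sqrt p * L * ∑ t ∈ Finset.range n, D t * a t
        ≤ Real.sqrt p * L * ((s : ℝ) * S) :=
      mul_le_mul_of_nonneg_left hDa (by positivity)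
    nlinarith [h1, h2]
  -- positivity of the constant
  have hC : 0 < 1 / η - L - 2 * Real.sqrt p * L * s := by
    have hM : 0 < L * (1 + 2 * Real.sqrt p * s) := by positivity
    have h2 : L * (1 + 2 * Real.sqrt p * s) < 1 / η := by
      rw [lt_div_iff₀ hη]
      have h3 := mul_lt_mul_of_pos_right hstep hM
      rw [one_div, inv_mul_cancel₀ (ne_of_gt hM)] at h3
      nlinarith [h3]
    nlinarith [h2]
  -- EReal endgame
  have hFΦ : ∀ N : ℕ, F (X N) = ((f (X N) + ∑ i, G N i : ℝ) : EReal) := by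
    intro N
    rw [hF, EReal.coe_add, ereal_coe_sum]
    congr 1
    refine Finset.sum_congr rfl fun i _ => ?_
    rw [hX]
    exact hcoeG i N
  obtain ⟨m, hm⟩ := hF_bdd
  have hinf_bot : sInf (Set.range F) ≠ ⊥ := by
    have h1 : (m : EReal) ≤ sInf (Set.range F) :=
      le_sInf (by rintro b ⟨y, rfl⟩; exact hm y)
    intro hc
    rw [hc, le_bot_iff] at h1
    exact (EReal.coe_ne_bot m) h1
  have hinf_le : ∀ N : ℕ, sInf (Set.range F) ≤ ((f (X N) + ∑ i, G N i : ℝ) : EReal) := by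
    intro N
    rw [← hFΦ]
    exact sInf_le ⟨X N, rfl⟩
  have hinf_top : sInf (Set.range F) ≠ ⊤ :=
    ne_top_of_le_ne_top (EReal.coe_ne_top _) (hinf_le 0)
  set I : ℝ := (sInf (Set.range F)).toReal with hI
  have hIle : ∀ N : ℕ, I ≤ f (X N) + ∑ i, G N i := by
    intro N
    have := EReal.toReal_le_toReal (hinf_le N) hinf_bot (EReal.coe_ne_top _)
    rwa [EReal.toReal_coe] at this
  have hRHS : (F (X 0) - sInf (Set.range F)).toReal = (f (X 0) + ∑ i, G 0 i) - I := by
    rw [hFΦ 0, EReal.toReal_sub (EReal.coe_ne_top _) (EReal.coe_ne_bot _) hinf_top hinf_bot,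
      EReal.toReal_coe]
  -- final algebra
  rw [hRHS]
  set c : ℝ := 1 / η - L - 2 * Real.sqrt p * L * s with hc
  have hCo : 1 / (2 * η) - L / 2 - Real.sqrt p * L * s = c / 2 := by
    rw [hc]
    have : 1 / (2 * η) = (1 / η) / 2 := by
      rw [div_div, mul_comm]
    rw [this]; ring
  rw [hCo] at hmain
  have hR : c / 2 * S ≤ (f (X 0) + ∑ i, G 0 i) - I := by
    have := hIle n
    linarith
  have hc_pos : (0:ℝ) < c := by rw [hc]; exact hC
  have hfin := mul_le_mul_of_nonneg_left hR (le_of_lt (div_pos two_pos hc_pos))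
  have hid : 2 / c * (c / 2 * S) = S := by
    have hcne : c ≠ 0 := ne_of_gt hc_pos
    field_simp
  linarith
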